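/- Let r ≥ 3, let p_1, ..., p_r be distinct odd primes, n = p_1 p_2 ⋯ p_r, D = {p_1, ..., p_r}, and S = ⋃_{d∈D} G_n(d). Then the integral circulant graph G(n;S) has diameter exactly 2. -/

import Mathlib

lemma exists_ne_ne {α : Type*} [Fintype α] [DecidableEq α] (h : 3 ≤ Fintype.card α) (x y : α) :
    ∃ z, z ≠ x ∧ z ≠ y := by
  by_contra hc
  push_neg at hc
  have hsub : (Finset.univ : Finset α) ⊆ {x, y} := fun z _ => by
    rcases Classical.em (z = x) with h1 | h1
    · simp [h1]
    · simp [hc z h1]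
  have h2 : Finset.univ.card ≤ ({x, y} : Finset α).card := Finset.card_le_card hsub
  have h3 : ({x, y} : Finset α).card ≤ 2 :=
    (Finset.card_insert_le _ _).trans (by simp)
  rw [Finset.card_univ] at h2
  omega

lemma gcd_eq_of_pattern {r : ℕ} (p : Fin r → ℕ) (hprime : ∀ i, (p i).Prime)
    (m : ℕ) (i₀ : Fin r) (hdvd : ∀ i, p i ∣ m ↔ i = i₀) :
    Nat.gcd m (∏ i, p i) = p i₀ := by
  have hd0 : p i₀ ∣ Nat.gcd m (∏ i, p i) :=
    Nat.dvd_gcd ((hdvd i₀).2 rfl) (Finset.dvd_prod_of_mem _ (Finset.mem_univ _))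
  have hcop : Nat.Coprime (Nat.gcd m (∏ i, p i)) (∏ i ∈ Finset.univ.erase i₀, p i) := by
    apply Nat.Coprime.prod_right
    intro j hj
    rw [Nat.coprime_comm]
    refine ((hprime j).coprime_iff_not_dvd).2 fun hd => ?_
    exact (Finset.mem_erase.1 hj).1 ((hdvd j).1 (hd.trans (Nat.gcd_dvd_left _ _)))
  have heq : (∏ i, p i) = p i₀ * ∏ i ∈ Finset.univ.erase i₀, p i :=
    (Finset.mul_prod_erase _ _ (Finset.mem_univ i₀)).symm
  have hd1 : Nat.gcd m (∏ i, p i) ∣ p i₀ :=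
    Nat.Coprime.dvd_of_dvd_mul_right hcop ((Nat.gcd_dvd_right _ _).trans (dvd_of_eq heq))
  exact Nat.dvd_antisymm hd1 hd0

lemma exists_decomp {r : ℕ} (hr : 3 ≤ r) (p : Fin r → ℕ) (hprime : ∀ i, (p i).Prime)
    (hodd : ∀ i, Odd (p i)) (hinj : Function.Injective p)
    (c : ZMod (∏ i, p i)) :
    ∃ a b : ZMod (∏ i, p i), a + b = c ∧ a ≠ 0 ∧ b ≠ 0 ∧
      (∃ i₀, Nat.gcd a.val (∏ i, p i) = p i₀) ∧ (∃ i₁, Nat.gcd b.val (∏ i, p i) = p i₁) := by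
  haveI : NeZero (∏ i, p i) := ⟨Finset.prod_ne_zero_iff.2 fun i _ => (hprime i).ne_zero⟩
  have hcop : Pairwise (Function.onFun Nat.Coprime p) := fun i j hij =>
    (Nat.coprime_primes (hprime i) (hprime j)).2 fun h => hij (hinj h)
  set e := ZMod.prodEquivPi p hcop with he
  have hcomp : ∀ (x : ZMod (∏ i, p i)) (i : Fin r), e x i = ((x.val : ℕ) : ZMod (p i)) := by
    intro x i
    conv_lhs => rw [← ZMod.natCast_zmod_val x]
    rw [map_natCast, Pi.natCast_apply]
  have hdvd_iff : ∀ (x : ZMod (∏ i, p i)) (i : Fin r), (p i ∣ x.val ↔ e x i = 0) := by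
    intro x i
    haveI : NeZero (p i) := ⟨(hprime i).ne_zero⟩
    rw [hcomp, ZMod.natCast_eq_zero_iff]
  have h3le : ∀ i, 3 ≤ p i := by
    intro i
    have h2 := (hprime i).two_le
    rcases Nat.lt_or_ge (p i) 3 with h | h
    · exfalso
      have hp2 : p i = 2 := by omega
      have := hodd i
      rw [hp2] at this
      simp [Nat.odd_iff] at this
    · exact h
  have hw : ∀ i : Fin r, ∃ z : ZMod (p i), z ≠ 0 ∧ z ≠ e c i := by
    intro i
    haveI : NeZero (p i) := ⟨(hprime i).ne_zero⟩
    exact exists_ne_ne (by rw [ZMod.card]; exact h3le i) 0 (e c i)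
  choose w hw0 hwc using hw
  obtain ⟨i₀, i₁, t, ht0, htc⟩ :
      ∃ (i₀ i₁ : Fin r) (t : ∀ i, ZMod (p i)),
        (∀ i, t i = 0 ↔ i = i₀) ∧ (∀ i, t i = e c i ↔ i = i₁) := by
    by_cases hex : ∃ i, e c i = 0
    · obtain ⟨j₀, h0⟩ := hex
      refine ⟨j₀, j₀, fun i => if i = j₀ then 0 else w i, fun i => ?_, fun i => ?_⟩ <;>
        · by_cases hi : i = j₀
          · subst hi; simp [h0]
          · simp [hi, hw0 i, hwc i]
    · push_neg at hex
      have h0r : (0 : ℕ) < r := by omega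
      have h1r : (1 : ℕ) < r := by omega
      have h01 : (⟨0, h0r⟩ : Fin r) ≠ ⟨1, h1r⟩ := by
        intro h; simpa using congrArg Fin.val h
      refine ⟨⟨0, h0r⟩, ⟨1, h1r⟩,
        fun i => if i = ⟨0, h0r⟩ then 0 else if i = ⟨1, h1r⟩ then e c i else w i,
        fun i => ?_, fun i => ?_⟩
      · by_cases hi : i = ⟨0, h0r⟩
        · simp [hi]
        · by_cases hi1 : i = ⟨1, h1r⟩
          · simp [hi, hi1, hex i]
          · simp [hi, hi1, hw0 i]
      · by_cases hi : i = ⟨0, h0r⟩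
        · subst hi; simp [h01, (hex _).symm]
        · by_cases hi1 : i = ⟨1, h1r⟩
          · simp [hi, hi1]
          · simp [hi, hi1, hwc i]
  have hea : e (e.symm t) = t := e.apply_symm_apply t
  have hpa : ∀ i, p i ∣ (e.symm t).val ↔ i = i₀ := by
    intro i; rw [hdvd_iff, hea]; exact ht0 i
  have hpb : ∀ i, p i ∣ (c - e.symm t).val ↔ i = i₁ := by
    intro i
    rw [hdvd_iff, map_sub, hea, Pi.sub_apply, sub_eq_zero]
    exact ⟨fun h => (htc i).1 h.symm, fun h => ((htc i).2 h).symm⟩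
  have hne2 : ∀ k : Fin r, ∃ j : Fin r, j ≠ k := fun k =>
    (exists_ne_ne (by rw [Fintype.card_fin]; omega) k k).imp fun z h => h.1
  refine ⟨e.symm t, c - e.symm t, by ring, ?_, ?_, ⟨i₀, gcd_eq_of_pattern p hprime _ i₀ hpa⟩,
    ⟨i₁, gcd_eq_of_pattern p hprime _ i₁ hpb⟩⟩
  · intro h
    obtain ⟨j, hj⟩ := hne2 i₀
    exact hj ((hpa j).1 (by rw [h, ZMod.val_zero]; exact dvd_zero _))
  · intro h
    obtain ⟨j, hj⟩ := hne2 i₁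
    exact hj ((hpb j).1 (by rw [h, ZMod.val_zero]; exact dvd_zero _))


lemma helper_pi_one {r : ℕ} (p : Fin r → ℕ) (hprime : ∀ i, (p i).Prime) (m : ℕ)
    (hmod : (∏ i, p i) ∣ m + 1) (i : Fin r) (hg : Nat.gcd m (∏ i, p i) = p i) : False := by
  have hdvd : p i ∣ m := hg ▸ Nat.gcd_dvd_left _ _
  have h2 : p i ∣ m + 1 :=
    dvd_trans (Finset.dvd_prod_of_mem p (Finset.mem_univ i)) hmod
  have h3 := Nat.dvd_sub h2 hdvd
  rw [Nat.add_sub_cancel_left] at h3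
  exact (hprime i).one_lt.ne' (Nat.dvd_one.1 h3)


/-- `Gn n d = {k : 1 ≤ k ≤ n-1, gcd(k,n) = d}`. -/
def Gn (n d : ℕ) : Finset ℕ := (Finset.Ioo 0 n).filter fun k => Nat.gcd k n = d

/-- For `r ≥ 3` and distinct odd primes `p₁, …, p_r`, the
integral circulant graph `G(n;S)` with `n = p₁ ⋯ p_r`, `D = {p₁, …, p_r}` and
`S = ⋃_{d ∈ D} G_n(d)` has diameter exactly `2`. -/
theorem stmt_13 (r : ℕ) (hr : 3 ≤ r) (p : Fin r → ℕ)
    (hprime : ∀ i, (p i).Prime) (hodd : ∀ i, Odd (p i))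
    (hinj : Function.Injective p)
    (n : ℕ) (hn : n = ∏ i, p i)
    (D : Finset ℕ) (hD : D = Finset.image p Finset.univ)
    (S : Finset ℕ) (hS : S = D.biUnion (Gn n))
    (G : SimpleGraph (ZMod n))
    (hG : ∀ u v : ZMod n, G.Adj u v ↔ (u - v).val ∈ S) :
    G.diam = 2 := by
  subst hS hD hn
  haveI : NeZero (∏ i, p i) := ⟨Finset.prod_ne_zero_iff.2 fun i _ => (hprime i).ne_zero⟩
  have i0 : Fin r := ⟨0, by omega⟩
  have h1n : 1 < ∏ i, p i :=
    lt_of_lt_of_le (hprime i0).one_lt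
      (Finset.single_le_prod' (fun i _ => (hprime i).one_lt.le) (Finset.mem_univ i0))
  haveI : Fact (1 < ∏ i, p i) := ⟨h1n⟩
  have memS : ∀ k : ℕ,
      k ∈ (Finset.image p Finset.univ).biUnion (Gn (∏ i, p i)) ↔
        0 < k ∧ k < ∏ i, p i ∧ ∃ i, Nat.gcd k (∏ i, p i) = p i := by
    intro k
    simp only [Finset.mem_biUnion, Finset.mem_image, Finset.mem_univ, true_and, Gn,
      Finset.mem_filter, Finset.mem_Ioo]
    constructor
    · rintro ⟨d, ⟨i, rfl⟩, ⟨h1, h2⟩, h3⟩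
      exact ⟨h1, h2, i, h3⟩
    · rintro ⟨h1, h2, i, h3⟩
      exact ⟨p i, ⟨i, rfl⟩, ⟨h1, h2⟩, h3⟩
  have adj_of : ∀ u w : ZMod (∏ i, p i), u - w ≠ 0 →
      (∃ i, Nat.gcd (u - w).val (∏ i, p i) = p i) → G.Adj u w := by
    intro u w h0 hex
    rw [hG, memS]
    exact ⟨Nat.pos_of_ne_zero fun h => h0 ((ZMod.val_eq_zero _).1 h), ZMod.val_lt _, hex⟩
  have hle : ∀ u v : ZMod (∏ i, p i), G.edist u v ≤ 2 := by
    intro u v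
    by_cases huv : u = v
    · subst huv
      rw [SimpleGraph.edist_self]
      exact zero_le
    · obtain ⟨a, b, hab, ha0, hb0, hga, hgb⟩ := exists_decomp hr p hprime hodd hinj (u - v)
      have h1 : G.Adj u (v + b) := by
        have huw : u - (v + b) = a := by
          have : a = u - v - b := by rw [← hab]; ring
          rw [this]; ring
        exact adj_of _ _ (by rw [huw]; exact ha0) (by rw [huw]; exact hga)
      have h2 : G.Adj (v + b) v := by
        have huw : (v + b) - v = b := by ring
        exact adj_of _ _ (by rw [huw]; exact hb0) (by rw [huw]; exact hgb)
      have := SimpleGraph.Walk.edist_le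
        (SimpleGraph.Walk.cons h1 (SimpleGraph.Walk.cons h2 SimpleGraph.Walk.nil))
      simpa using this
  have hnadj : ¬ G.Adj 0 1 := by
    rw [hG, memS]
    rintro ⟨-, -, i, hi⟩
    refine helper_pi_one p hprime _ ?_ i hi
    rw [← ZMod.natCast_eq_zero_iff]
    push_cast
    rw [ZMod.natCast_zmod_val]
    ring
  have h01 : (0 : ZMod (∏ i, p i)) ≠ 1 := fun h => one_ne_zero h.symm
  have h2le : 2 ≤ G.edist 0 1 := by
    by_contra h
    push_neg at h
    have hle1 : G.edist 0 1 ≤ 1 := by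
      rw [show (2 : ℕ∞) = 1 + 1 by rfl] at h
      exact (ENat.lt_add_one_iff (by simp)).1 h
    rcases hle1.lt_or_eq with h' | h'
    · have : G.edist 0 1 = 0 := by
        have := (ENat.lt_add_one_iff (m := G.edist 0 1) (n := 0) (by simp)).1 (by simpa using h')
        simpa using this
      exact h01 (SimpleGraph.edist_eq_zero_iff.1 this)
    · exact hnadj (SimpleGraph.edist_eq_one_iff_adj.1 h')
  have hdiam : G.ediam = 2 :=
    le_antisymm (SimpleGraph.ediam_le_of_edist_le fun u v => hle u v)
      (le_trans h2le SimpleGraph.edist_le_ediam)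
  rw [SimpleGraph.diam, hdiam]
  rfl
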